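/- Let p₁, ..., p_t be distinct primes with d ∈ M_b(p_i) for each i, h_i ≥ 1, N = p₁^{h₁}···p_t^{h_t}, ord_N(b) = d·k. Then d ∈ M_b(N) if and only if gcd(b^k − 1, N) = 1, and this is equivalent to: for each i, ord_{p_i}(b) does not divide k. -/

import Mathlib

/-- `d ∈ M_b(N)`: for every prime `r` dividing `gcd(b^{ord_N(b)/d} − 1, N)`,
`ν_r(N) ≤ ν_r(d)`. -/
def MidyProp (b N d : ℕ) : Prop :=
  ∀ r : ℕ, r.Prime → r ∣ Nat.gcd (b ^ (orderOf (b : ZMod N) / d) - 1) N →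
    padicValNat r N ≤ padicValNat r d

/-- with `d ∈ M_b(p_i)` for each `i`, `N = ∏ p_i^{h_i}` and
`ord_N(b) = d·k`, one has `d ∈ M_b(N) ↔ gcd(b^k − 1, N) = 1`, and this is equivalent to
`ord_{p_i}(b) ∤ k` for every `i`. -/
theorem stmt17 (b t : ℕ) (hb : 1 < b) (ht : 0 < t)
    (p h : Fin t → ℕ) (d k : ℕ) (hd : 1 < d)
    (hp : ∀ i, (p i).Prime) (hinj : Function.Injective p)
    (hpb : ∀ i, ¬ p i ∣ b) (hh : ∀ i, 1 ≤ h i)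
    (hdvd : ∀ i, d ∣ orderOf (b : ZMod (p i)))
    (hM : ∀ i, MidyProp b (p i) d)
    (hord : orderOf (b : ZMod (∏ i, p i ^ h i)) = d * k) :
    (MidyProp b (∏ i, p i ^ h i) d ↔ Nat.gcd (b ^ k - 1) (∏ i, p i ^ h i) = 1) ∧
    (Nat.gcd (b ^ k - 1) (∏ i, p i ^ h i) = 1 ↔
      ∀ i, ¬ orderOf (b : ZMod (p i)) ∣ k) := by
  have hbk : ∀ m : ℕ, 1 ≤ b ^ m := fun m => Nat.one_le_pow _ _ (by omega)
  set N := ∏ i, p i ^ h i with hN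
  have hN0 : N ≠ 0 :=
    Finset.prod_ne_zero_iff.mpr fun i _ => pow_ne_zero _ (hp i).pos.ne'
  -- prime divisors of N are the p i
  have hprimeN : ∀ r : ℕ, r.Prime → r ∣ N → ∃ i, r = p i := by
    intro r hr hrN
    obtain ⟨i, -, hi⟩ := (Prime.dvd_finset_prod_iff hr.prime _).mp hrN
    exact ⟨i, (Nat.prime_dvd_prime_iff_eq hr (hp i)).mp (hr.dvd_of_dvd_pow hi)⟩
  have hordp : ∀ i, orderOf (b : ZMod (p i)) ∣ p i - 1 := by
    intro i
    haveI : Fact (p i).Prime := ⟨hp i⟩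
    have hbz : (b : ZMod (p i)) ≠ 0 := by
      rw [Ne, ZMod.natCast_eq_zero_iff]
      exact hpb i
    exact orderOf_dvd_of_pow_eq_one (ZMod.pow_card_sub_one_eq_one hbz)
  have hpd : ∀ i, ¬ p i ∣ d := by
    intro i hpi
    have h1 : d ∣ p i - 1 := (hdvd i).trans (hordp i)
    have h2 : d ≤ p i - 1 := Nat.le_of_dvd (by have := (hp i).two_le; omega) h1
    have h3 := Nat.le_of_dvd (by omega) hpi
    have := (hp i).two_le
    omega
  have hkey : ∀ i m, p i ∣ b ^ m - 1 ↔ orderOf (b : ZMod (p i)) ∣ m := by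
    intro i m
    rw [orderOf_dvd_iff_pow_eq_one, ← Nat.cast_pow]
    have h1 : ((1 : ℕ) : ZMod (p i)) = 1 := Nat.cast_one
    rw [← h1, ZMod.natCast_eq_natCast_iff]
    exact ⟨fun hdv => ((Nat.modEq_iff_dvd' (hbk m)).mpr hdv).symm,
      fun he => (Nat.modEq_iff_dvd' (hbk m)).mp he.symm⟩
  have hk : orderOf (b : ZMod N) / d = k := by
    rw [hord, Nat.mul_div_cancel_left _ (by omega : 0 < d)]
  have hpiN : ∀ i, p i ∣ N := fun i =>
    (dvd_pow_self (p i) (by have := hh i; omega : h i ≠ 0)).trans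
      (Finset.dvd_prod_of_mem _ (Finset.mem_univ i))
  have hvalN : ∀ i, 1 ≤ padicValNat (p i) N := by
    intro i
    haveI : Fact (p i).Prime := ⟨hp i⟩
    exact one_le_padicValNat_of_dvd hN0 (hpiN i)
  constructor
  · constructor
    · intro hM'
      rw [Nat.eq_one_iff_not_exists_prime_dvd]
      intro r hr hrg
      obtain ⟨i, rfl⟩ := hprimeN r hr (hrg.trans (Nat.gcd_dvd_right _ _))
      have := hM' _ hr (by rw [hk]; exact hrg)
      rw [padicValNat.eq_zero_of_not_dvd (hpd i)] at this
      exact absurd this (by have := hvalN i; omega)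
    · intro hg r hr hrg
      rw [hk, hg] at hrg
      exact absurd (Nat.dvd_one.mp hrg) hr.ne_one
  · constructor
    · intro hg i hdk
      have h1 : p i ∣ b ^ k - 1 := (hkey i k).mpr hdk
      have := Nat.dvd_gcd h1 (hpiN i)
      rw [hg] at this
      exact (hp i).ne_one (Nat.dvd_one.mp this)
    · intro hall
      rw [Nat.eq_one_iff_not_exists_prime_dvd]
      intro r hr hrg
      obtain ⟨i, rfl⟩ := hprimeN r hr (hrg.trans (Nat.gcd_dvd_right _ _))
      exact hall i ((hkey i k).mp (hrg.trans (Nat.gcd_dvd_left _ _)))
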